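/- The family of temporal hash functions τ^k (induced by k uniform random pivots on [0,T]) is (Δ₁, Δ₂, (1-Δ₁/T)^k, (1-Δ₂/T)^k)-sensitive with respect to the time-delay distance: if the delay |t-t'| between two time points is at most Δ₁ then the collision probability is at least (1-Δ₁/T)^k, and if the delay is at least Δ₂ then the collision probability is at most (1-Δ₂/T)^k. -/

import Mathlib

open MeasureTheory Set

/-- the temporal hash family τ^k with k i.i.d. uniform pivots on
[0,T] is (Δ₁, Δ₂, (1-Δ₁/T)^k, (1-Δ₂/T)^k)-sensitive w.r.t. the time-delay
distance: collision (no pivot strictly separating the two time points) has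
probability at least (1-Δ₁/T)^k when |t-t'| ≤ Δ₁, and at most (1-Δ₂/T)^k
when |t-t'| ≥ Δ₂. -/
theorem temporal_hash_locality_sensitive
    (T : ℝ) (hT : 0 < T) (k : ℕ) (Δ₁ Δ₂ : ℝ)
    (hΔ₁ : 0 ≤ Δ₁) (hΔ₁T : Δ₁ ≤ T) (hΔ₂ : 0 ≤ Δ₂) (hΔ₂T : Δ₂ ≤ T)
    (t t' : ℝ) (ht : t ∈ Icc (0:ℝ) T) (ht' : t' ∈ Icc (0:ℝ) T) :
    let P := Measure.pi (fun _ : Fin k =>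
        (ENNReal.ofReal T)⁻¹ • volume.restrict (Icc (0:ℝ) T))
    let collide := {p : Fin k → ℝ | ∀ i, p i ∉ Ioc (min t t') (max t t')}
    (|t - t'| ≤ Δ₁ → ENNReal.ofReal ((1 - Δ₁ / T) ^ k) ≤ P collide) ∧
    (Δ₂ ≤ |t - t'| → P collide ≤ ENNReal.ofReal ((1 - Δ₂ / T) ^ k)) := by
  intro P collide
  set a := min t t' with ha
  set b := max t t' with hb
  set d := |t - t'| with hd
  have hdab : b - a = d := by rw [hd, abs_sub_comm]; exact max_sub_min_eq_abs t t'
  have hd0 : 0 ≤ d := abs_nonneg _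
  have hdT : d ≤ T := by
    rw [← hdab]
    have h1 : a ≥ 0 := le_min ht.1 ht'.1
    have h2 : b ≤ T := max_le ht.2 ht'.2
    linarith
  have hμ : (fun _ : Fin k => (ENNReal.ofReal T)⁻¹ • volume.restrict (Icc (0:ℝ) T)) =
      (fun _ : Fin k => (ENNReal.ofReal T)⁻¹ • volume.restrict (Icc (0:ℝ) T)) := rfl
  -- the single-coordinate measure
  set μ : Measure ℝ := (ENNReal.ofReal T)⁻¹ • volume.restrict (Icc (0:ℝ) T) with hμdef
  have hTne : ENNReal.ofReal T ≠ 0 := by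
    simp [ENNReal.ofReal_eq_zero, not_le, hT]
  have hTnt : ENNReal.ofReal T ≠ ⊤ := ENNReal.ofReal_ne_top
  haveI : IsProbabilityMeasure μ := by
    constructor
    rw [hμdef, Measure.smul_apply, Measure.restrict_apply MeasurableSet.univ]
    simp [Real.volume_Icc, hT.le, ENNReal.inv_mul_cancel hTne hTnt]
  have hcompl : μ ((Ioc a b)ᶜ) = ENNReal.ofReal (1 - d / T) := by
    rw [hμdef, Measure.smul_apply, Measure.restrict_apply measurableSet_Ioc.compl]
    have hinter : (Ioc a b)ᶜ ∩ Icc (0:ℝ) T = Icc 0 T \ Ioc a b := by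
      rw [diff_eq, inter_comm]
    rw [hinter, measure_diff]
    · rw [Real.volume_Icc, Real.volume_Ioc, hdab, ← ENNReal.ofReal_sub _ hd0,
        ← ENNReal.ofReal_inv_of_pos hT, smul_eq_mul,
        ← ENNReal.ofReal_mul (by positivity)]
      congr 1
      field_simp
      ring
    · intro x hx
      exact ⟨le_trans (le_min ht.1 ht'.1) hx.1.le, le_trans hx.2 (max_le ht.2 ht'.2)⟩
    · exact measurableSet_Ioc.nullMeasurableSet
    · rw [Real.volume_Ioc]; exact ENNReal.ofReal_ne_top
  have hcoll : collide = Set.pi univ (fun _ : Fin k => (Ioc a b)ᶜ) := by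
    ext p
    simp only [collide, mem_setOf_eq, Set.mem_pi, mem_univ, true_implies, mem_compl_iff, ← ha, ← hb]
  have hP : P collide = ENNReal.ofReal ((1 - d / T) ^ k) := by
    rw [hcoll]
    show Measure.pi (fun _ : Fin k => μ) _ = _
    rw [Measure.pi_pi]
    simp only [hcompl, Finset.prod_const, Finset.card_univ, Fintype.card_fin]
    rw [← ENNReal.ofReal_pow (by rw [sub_nonneg, div_le_one hT]; exact hdT)]
  have hnn : 0 ≤ 1 - d / T := by
    rw [sub_nonneg, div_le_one hT]; exact hdT
  constructor
  · intro h1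
    rw [hP]
    apply ENNReal.ofReal_le_ofReal
    apply pow_le_pow_left₀ (by rw [sub_nonneg, div_le_one hT]; exact hΔ₁T)
    gcongr
  · intro h2
    rw [hP]
    apply ENNReal.ofReal_le_ofReal
    apply pow_le_pow_left₀ hnn
    gcongr
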